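/- Let A be a commutative K-algebra graded by ℤ^n which is finitely generated as a K-algebra. Then every orbit cone ω(x) is a finitely generated (polyhedral) convex cone in ℚ^n, and the set of all orbit cones {ω(x) : x a K-algebra homomorphism A → K} is finite. -/

import Mathlib

/-- The convex cone in `ℚ^n` generated over `ℚ_{≥0}` by a set `S`:
all finite nonnegative rational combinations of elements of `S`. -/
def coneGen {n : ℕ} (S : Set (Fin n → ℚ)) : Set (Fin n → ℚ) :=
  {v | ∃ (s : Finset (Fin n → ℚ)) (c : (Fin n → ℚ) → ℚ),
    (∀ w ∈ s, 0 ≤ c w ∧ w ∈ S) ∧ v = ∑ w ∈ s, c w • w}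

/-- The orbit cone `ω(x)` of a `K`-algebra homomorphism `x : A → K`: the convex
cone generated over `ℚ_{≥0}` by all `m ∈ ℤ^n` admitting `a ∈ 𝒜 m` with `x a ≠ 0`. -/
def orbitCone {K A : Type*} [Field K] [CommRing A] [Algebra K A]
    {n : ℕ} (𝒜 : (Fin n → ℤ) → Submodule K A) (x : A →ₐ[K] K) : Set (Fin n → ℚ) :=
  coneGen {v | ∃ (m : Fin n → ℤ) (a : A), a ∈ 𝒜 m ∧ x a ≠ 0 ∧ v = fun j => (m j : ℚ)}

namespace ConeAux

variable {n : ℕ}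

/-- Cast a lattice point to `ℚ^n`. -/
def castQ (m : Fin n → ℤ) : Fin n → ℚ := fun j => (m j : ℚ)

lemma castQ_zero : castQ (0 : Fin n → ℤ) = 0 := by funext j; simp [castQ]

lemma castQ_add (a b : Fin n → ℤ) : castQ (a + b) = castQ a + castQ b := by
  funext j; simp [castQ]

lemma zero_mem_coneGen (S : Set (Fin n → ℚ)) : (0 : Fin n → ℚ) ∈ coneGen S :=
  ⟨∅, 0, by simp, by simp⟩

lemma subset_coneGen (S : Set (Fin n → ℚ)) : S ⊆ coneGen S := fun v hv =>
  ⟨{v}, fun _ => 1, by simp [hv], by simp⟩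

lemma coneGen_mono {S T : Set (Fin n → ℚ)} (h : S ⊆ T) : coneGen S ⊆ coneGen T := by
  rintro v ⟨s, c, hc, rfl⟩
  exact ⟨s, c, fun w hw => ⟨(hc w hw).1, h (hc w hw).2⟩, rfl⟩

lemma add_mem_coneGen {S : Set (Fin n → ℚ)} {v w : Fin n → ℚ}
    (hv : v ∈ coneGen S) (hw : w ∈ coneGen S) : v + w ∈ coneGen S := by
  classical
  obtain ⟨s₁, c₁, h₁, rfl⟩ := hv
  obtain ⟨s₂, c₂, h₂, rfl⟩ := hw
  have e1 : ∀ (s' : Finset (Fin n → ℚ)) (c : (Fin n → ℚ) → ℚ), s' ⊆ s₁ ∪ s₂ →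
      ∑ u ∈ s₁ ∪ s₂, (if u ∈ s' then c u else 0) • u = ∑ u ∈ s', c u • u := by
    intro s' c hs'
    simp only [ite_smul, zero_smul]
    rw [Finset.sum_ite_mem, Finset.inter_eq_right.mpr hs']
  refine ⟨s₁ ∪ s₂, fun u => (if u ∈ s₁ then c₁ u else 0) + (if u ∈ s₂ then c₂ u else 0),
    ?_, ?_⟩
  · intro u hu
    constructor
    · apply add_nonneg <;> split <;>
        first | exact (h₁ u ‹_›).1 | exact (h₂ u ‹_›).1 | rfl
    · rcases Finset.mem_union.1 hu with h | h
      · exact (h₁ u h).2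
      · exact (h₂ u h).2
  · simp only [add_smul, Finset.sum_add_distrib]
    rw [e1 s₁ c₁ Finset.subset_union_left, e1 s₂ c₂ Finset.subset_union_right]

lemma smul_mem_coneGen {S : Set (Fin n → ℚ)} {c : ℚ} (hc : 0 ≤ c) {v : Fin n → ℚ}
    (hv : v ∈ coneGen S) : c • v ∈ coneGen S := by
  obtain ⟨s, c', h', rfl⟩ := hv
  refine ⟨s, fun u => c * c' u, fun w hw => ⟨mul_nonneg hc (h' w hw).1, (h' w hw).2⟩, ?_⟩
  rw [Finset.smul_sum]
  refine Finset.sum_congr rfl fun w _ => ?_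
  show c • c' w • w = (c * c' w) • w
  rw [smul_smul]

lemma coneGen_subset {S T : Set (Fin n → ℚ)} (h : S ⊆ coneGen T) :
    coneGen S ⊆ coneGen T := by
  rintro v ⟨s, c, hc, rfl⟩
  refine Finset.sum_induction _ (· ∈ coneGen T)
    (fun a b ha hb => add_mem_coneGen ha hb) (zero_mem_coneGen T) ?_
  intro w hw
  exact smul_mem_coneGen (hc w hw).1 (h (hc w hw).2)

lemma castQ_mem_coneGen {Dx : Finset (Fin n → ℤ)} {m : Fin n → ℤ}
    (hm : m ∈ AddSubmonoid.closure (↑Dx : Set (Fin n → ℤ))) :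
    castQ m ∈ coneGen (↑(Dx.image castQ) : Set (Fin n → ℚ)) := by
  induction hm using AddSubmonoid.closure_induction with
  | mem d hd =>
      exact subset_coneGen _ (by exact Finset.mem_coe.2 (Finset.mem_image_of_mem _ hd))
  | zero => rw [castQ_zero]; exact zero_mem_coneGen _
  | add a b _ _ ha hb => rw [castQ_add]; exact add_mem_coneGen ha hb

end ConeAux

open ConeAux in
/-- Key graded-algebra lemma: if `A` is generated by homogeneous elements whose degrees
(on which `x` does not vanish) lie in the additive monoid closure of `Dx`, then the degree
of any homogeneous element not killed by `x` lies in that closure. -/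
lemma degree_mem_closure {K A : Type*} [Field K] [CommRing A] [Algebra K A]
    {n : ℕ} (𝒜 : (Fin n → ℤ) → Submodule K A) [GradedAlgebra 𝒜] (x : A →ₐ[K] K)
    (T : Set A) (hT : Algebra.adjoin K T = ⊤) (Dx : Set (Fin n → ℤ))
    (hTx : ∀ t ∈ T, ∃ d, t ∈ 𝒜 d ∧ (x t ≠ 0 → d ∈ AddSubmonoid.closure Dx)) :
    ∀ (m : Fin n → ℤ) (a : A), a ∈ 𝒜 m → x a ≠ 0 → m ∈ AddSubmonoid.closure Dx := by
  have key : ∀ a : A, ∀ m, x (DirectSum.decompose 𝒜 a m : A) ≠ 0 →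
      m ∈ AddSubmonoid.closure Dx := by
    intro a
    have ha : a ∈ Submodule.span K ((Submonoid.closure T : Submonoid A) : Set A) := by
      rw [← Algebra.adjoin_eq_span, hT]; trivial
    induction ha using Submodule.span_induction with
    | mem p hp =>
        -- p is a product of elements of T, hence homogeneous
        have hP : ∃ d, p ∈ 𝒜 d ∧ (x p ≠ 0 → d ∈ AddSubmonoid.closure Dx) := by
          induction hp using Submonoid.closure_induction with
          | mem t ht => exact hTx t ht
          | one =>
              exact ⟨0, SetLike.one_mem_graded 𝒜, fun _ => AddSubmonoid.zero_mem _⟩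
          | mul p q _ _ hp hq =>
              obtain ⟨d₁, hd₁, hx₁⟩ := hp
              obtain ⟨d₂, hd₂, hx₂⟩ := hq
              refine ⟨d₁ + d₂, SetLike.mul_mem_graded hd₁ hd₂, fun hxy => ?_⟩
              rw [map_mul] at hxy
              exact AddSubmonoid.add_mem _ (hx₁ (left_ne_zero_of_mul hxy))
                (hx₂ (right_ne_zero_of_mul hxy))
        obtain ⟨d, hd, hxd⟩ := hP
        intro m hm
        by_cases hmd : m = d
        · subst hmd
          rw [DirectSum.decompose_of_mem_same 𝒜 hd] at hm
          exact hxd hm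
        · rw [DirectSum.decompose_of_mem_ne 𝒜 hd (Ne.symm hmd)] at hm
          simp at hm
    | zero => intro m hm; simp at hm
    | add p q _ _ hp hq =>
        intro m hm
        rw [DirectSum.decompose_add] at hm
        by_cases h1 : x (DirectSum.decompose 𝒜 p m : A) ≠ 0
        · exact hp m h1
        · push_neg at h1
          refine hq m fun h2 => hm ?_
          rw [DirectSum.add_apply, Submodule.coe_add, map_add, h1, h2, add_zero]
    | smul c p _ hp =>
        intro m hm
        rw [DirectSum.decompose_smul] at hm
        refine hp m fun h2 => hm ?_
        rw [DirectSum.smul_apply, Submodule.coe_smul, map_smul, h2, smul_zero]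
  intro m a ha hxa
  refine key a m ?_
  rwa [DirectSum.decompose_of_mem_same 𝒜 ha]

open ConeAux in
/-- Let `A` be a commutative `K`-algebra graded by `ℤ^n` which is finitely generated
as a `K`-algebra. Then every orbit cone `ω(x)` is a finitely generated (polyhedral)
convex cone in `ℚ^n`, and the set of all orbit cones is finite. -/
theorem orbitCones_polyhedral_and_finitely_many
    {K A : Type*} [Field K] [CommRing A] [Algebra K A]
    {n : ℕ} (hn : 1 ≤ n) (𝒜 : (Fin n → ℤ) → Submodule K A) [GradedAlgebra 𝒜]
    [Algebra.FiniteType K A] :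
    (∀ x : A →ₐ[K] K, ∃ s : Finset (Fin n → ℚ), orbitCone 𝒜 x = coneGen ↑s) ∧
      {C : Set (Fin n → ℚ) | ∃ x : A →ₐ[K] K, C = orbitCone 𝒜 x}.Finite := by
  classical
  obtain ⟨G, hG⟩ := (inferInstance : Algebra.FiniteType K A).1
  -- D : finite set of degrees of homogeneous components of the generators
  set D : Finset (Fin n → ℤ) :=
    G.biUnion (fun g => (DirectSum.decompose 𝒜 g).support) with hD
  -- T : homogeneous components of generators
  set T : Set A := {t | ∃ g ∈ G, ∃ m, t = (DirectSum.decompose 𝒜 g m : A)} with hTdef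
  have hT : Algebra.adjoin K T = ⊤ := by
    refine top_unique ?_
    rw [← hG]
    refine Algebra.adjoin_le ?_
    intro g hg
    rw [← DirectSum.sum_support_decompose 𝒜 g]
    refine Subalgebra.sum_mem _ fun m _ => Algebra.subset_adjoin ?_
    exact ⟨g, hg, m, rfl⟩
  -- the finite generating set of degrees for a given x
  set Dx : (A →ₐ[K] K) → Finset (Fin n → ℤ) :=
    fun x => D.filter (fun d => ∃ a ∈ 𝒜 d, x a ≠ 0) with hDx
  have main : ∀ x : A →ₐ[K] K,
      orbitCone 𝒜 x = coneGen (↑((Dx x).image castQ) : Set (Fin n → ℚ)) := by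
    intro x
    apply Set.Subset.antisymm
    · -- ⊆
      apply coneGen_subset
      rintro v ⟨m, a, ha, hxa, rfl⟩
      have hm : m ∈ AddSubmonoid.closure (↑(Dx x) : Set (Fin n → ℤ)) := by
        refine degree_mem_closure 𝒜 x T hT _ ?_ m a ha hxa
        rintro t ⟨g, hg, m', rfl⟩
        by_cases ht : (DirectSum.decompose 𝒜 g m' : A) = 0
        · refine ⟨0, ?_, fun hxt => absurd (by rw [ht, map_zero]) hxt⟩
          rw [ht]; exact Submodule.zero_mem _
        · refine ⟨m', SetLike.coe_mem _, fun hxt => AddSubmonoid.subset_closure ?_⟩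
          refine Finset.mem_coe.2 (Finset.mem_filter.2 ⟨?_, ⟨_, SetLike.coe_mem _, hxt⟩⟩)
          refine Finset.mem_biUnion.2 ⟨g, hg, ?_⟩
          rw [DFinsupp.mem_support_iff]
          exact fun h0 => ht (by rw [h0, Submodule.coe_zero])
      exact castQ_mem_coneGen hm
    · -- ⊇
      apply coneGen_mono
      rintro v hv
      obtain ⟨d, hd, rfl⟩ := Finset.mem_image.1 (Finset.mem_coe.1 hv)
      obtain ⟨-, a, ha, hxa⟩ := Finset.mem_filter.1 hd
      exact ⟨d, a, ha, hxa, rfl⟩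
  constructor
  · exact fun x => ⟨(Dx x).image castQ, main x⟩
  · refine Set.Finite.subset (Set.Finite.image
      (fun t : Finset (Fin n → ℤ) => coneGen (↑(t.image castQ) : Set (Fin n → ℚ)))
      D.powerset.finite_toSet) ?_
    rintro C ⟨x, rfl⟩
    exact ⟨Dx x, Finset.mem_coe.2 (Finset.mem_powerset.2 (Finset.filter_subset _ _)),
      (main x).symm⟩
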